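/- Let α ∈ (0,4) with α ≠ 1, set c₁ = 1/2 + √(12/α − 3)/6 and c₂ = 1/2 − √(12/α − 3)/6, and suppose c₁ is of type (K, ν) for some K, ν > 0. Let s₁ ≥ 0 and s₂ ≥ 1/2 + ν/2. Then there exists a constant C > 0 such that for all integers n, n₁, n₂ with n = n₁ + n₂, n ≠ 0, and with |n₁ − c₁ n| < 1 or |n₁ − c₂ n| < 1, one has (1 + |n|)^{s₁ + 1} ≤ C · (1 + |n₁|)^{s₁} · (1 + |n₂|)^{s₂} · |n³ − α n₁³ − α n₂³|^{1/2}. -/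

import Mathlib

/-- A real number `ρ` is of type `(K, ν)` if `|ρ - m/q| ≥ K / |q|^(2+ν)`
for all integers `m` and all nonzero integers `q`. -/
def IsOfType (ρ K ν : ℝ) : Prop :=
  ∀ m q : ℤ, q ≠ 0 → K / |(q : ℝ)| ^ (2 + ν) ≤ |ρ - (m : ℝ) / (q : ℝ)|

/-- The "far" factor in the resonance product is bounded below by a
uniform constant times `N`. -/
lemma far_bound (d K ν N F G : ℝ) (hd : 0 < d) (hK : 0 < K) (hν : 0 < ν)
    (hN : 1 ≤ N) (hFG : d * N ≤ F + G) (hG : G < 1)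
    (hF : K / N ^ (1 + ν) ≤ F) :
    min (d / 2) (K * (d / 2) ^ (2 + ν)) * N ≤ F := by
  have hN0 : (0 : ℝ) < N := lt_of_lt_of_le one_pos hN
  rcases le_or_gt N (2 / d) with hle | hlt
  · -- N small: use the Diophantine bound
    have h1 : (d / 2) * N ≤ 1 := by
      rw [div_mul_eq_mul_div, div_le_one (by norm_num)]
      calc d * N ≤ d * (2 / d) := by
            exact mul_le_mul_of_nonneg_left hle hd.le
        _ = 2 := by field_simp
    have h2 : ((d / 2) * N) ^ (2 + ν) ≤ 1 :=
      Real.rpow_le_one (by positivity) h1 (by linarith)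
    have h3 : (d / 2) ^ (2 + ν) * N ^ (2 + ν) ≤ 1 := by
      rwa [Real.mul_rpow (by positivity) hN0.le] at h2
    have hNpow : (0 : ℝ) < N ^ (1 + ν) := Real.rpow_pos_of_pos hN0 _
    have h4 : K * (d / 2) ^ (2 + ν) * N ≤ K / N ^ (1 + ν) := by
      rw [le_div_iff₀ hNpow]
      have hsplit : N ^ (2 + ν) = N * N ^ (1 + ν) := by
        rw [show (2 : ℝ) + ν = 1 + (1 + ν) by ring, Real.rpow_add hN0,
          Real.rpow_one]
      have h3' : (d / 2) ^ (2 + ν) * (N * N ^ (1 + ν)) ≤ 1 := by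
        rwa [hsplit] at h3
      calc K * (d / 2) ^ (2 + ν) * N * N ^ (1 + ν)
          = K * ((d / 2) ^ (2 + ν) * (N * N ^ (1 + ν))) := by ring
        _ ≤ K * 1 := mul_le_mul_of_nonneg_left h3' hK.le
        _ = K := mul_one K
    calc min (d / 2) (K * (d / 2) ^ (2 + ν)) * N
        ≤ K * (d / 2) ^ (2 + ν) * N :=
          mul_le_mul_of_nonneg_right (min_le_right _ _) hN0.le
      _ ≤ K / N ^ (1 + ν) := h4
      _ ≤ F := hF
  · -- N large: F ≥ d N - G > d N - 1 ≥ (d/2) N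
    have h1 : 1 ≤ (d / 2) * N := by
      rw [div_mul_eq_mul_div, le_div_iff₀ (by norm_num)]
      nlinarith [(div_lt_iff₀ hd).mp hlt]
    calc min (d / 2) (K * (d / 2) ^ (2 + ν)) * N ≤ (d / 2) * N :=
          mul_le_mul_of_nonneg_right (min_le_left _ _) hN0.le
      _ ≤ d * N - 1 := by nlinarith
      _ ≤ F := by linarith

set_option maxHeartbeats 1000000 in
theorem stmt_12 (α : ℝ) (hα : 0 < α) (hα4 : α < 4) (hα1 : α ≠ 1)
    (c₁ c₂ : ℝ)
    (hc₁ : c₁ = 1/2 + Real.sqrt (12/α - 3) / 6)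
    (hc₂ : c₂ = 1/2 - Real.sqrt (12/α - 3) / 6)
    (K ν : ℝ) (hK : 0 < K) (hν : 0 < ν) (htype : IsOfType c₁ K ν)
    (s₁ s₂ : ℝ) (hs₁ : 0 ≤ s₁) (hs₂ : 1/2 + ν/2 ≤ s₂) :
    ∃ C > 0, ∀ n n₁ n₂ : ℤ, n = n₁ + n₂ → n ≠ 0 →
      (|(n₁ : ℝ) - c₁ * (n : ℝ)| < 1 ∨ |(n₁ : ℝ) - c₂ * (n : ℝ)| < 1) →
      (1 + |(n : ℝ)|) ^ (s₁ + 1) ≤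
        C * (1 + |(n₁ : ℝ)|) ^ s₁ * (1 + |(n₂ : ℝ)|) ^ s₂ *
          |(n : ℝ) ^ 3 - α * (n₁ : ℝ) ^ 3 - α * (n₂ : ℝ) ^ 3| ^ ((1 : ℝ)/2) := by
  -- basic facts about c₁, c₂
  have hα0 : α ≠ 0 := ne_of_gt hα
  have hdisc : (0:ℝ) < 12 / α - 3 := by
    rw [sub_pos, lt_div_iff₀ hα]; linarith
  have hsq : Real.sqrt (12 / α - 3) ^ 2 = 12 / α - 3 := Real.sq_sqrt hdisc.le
  have hsqpos : 0 < Real.sqrt (12 / α - 3) := Real.sqrt_pos.mpr hdisc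
  have hc1pos : 0 < c₁ := by rw [hc₁]; positivity
  have hc2ne : c₂ ≠ 0 := by
    intro h
    rw [hc₂] at h
    have h3 : Real.sqrt (12 / α - 3) = 3 := by linarith
    rw [h3] at hsq
    apply hα1
    field_simp at hsq
    linarith
  have hsum : c₁ + c₂ = 1 := by rw [hc₁, hc₂]; ring
  have hprodc : 3 * α * (c₁ * c₂) = α - 1 := by
    have h : c₁ * c₂ = 1/4 - Real.sqrt (12/α - 3) ^ 2 / 36 := by
      rw [hc₁, hc₂]; ring
    rw [hsq] at h
    rw [h]; field_simp; ring
  -- the gap d = c₁ - c₂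
  set d : ℝ := c₁ - c₂ with hdd
  have hdpos : 0 < d := by
    have h : d = Real.sqrt (12/α - 3) / 3 := by rw [hdd, hc₁, hc₂]; ring
    rw [h]; positivity
  -- constants
  set m0 : ℝ := min c₁ |c₂| with hm0
  have hm0pos : 0 < m0 := lt_min hc1pos (abs_pos.mpr hc2ne)
  set ε : ℝ := min (d / 2) (K * (d / 2) ^ (2 + ν)) with hε
  have hεpos : 0 < ε := lt_min (by positivity) (by positivity)
  set D : ℝ := m0 ^ s₁ * m0 ^ ((1 + ν)/2) * (3 * α * ε * K) ^ ((1:ℝ)/2)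
    with hD
  have hDpos : 0 < D := by positivity
  refine ⟨2 ^ (s₁ + 1) / D, by positivity, ?_⟩
  intro n n₁ n₂ hn hn0 hnear
  set C : ℝ := 2 ^ (s₁ + 1) / D with hC
  have hnc : (n : ℝ) = (n₁ : ℝ) + (n₂ : ℝ) := by exact_mod_cast hn
  set N : ℝ := |(n : ℝ)| with hNdef
  have hN1 : 1 ≤ N := by
    rw [hNdef]
    have : (1:ℤ) ≤ |n| := Int.one_le_abs hn0
    calc (1:ℝ) ≤ ((|n| : ℤ) : ℝ) := by exact_mod_cast this
      _ = |(n:ℝ)| := by push_cast; ring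
  have hN0 : (0:ℝ) < N := lt_of_lt_of_le one_pos hN1
  -- Diophantine lower bound for |m - c₁ n|
  have hlow : ∀ m : ℤ, K / N ^ (1 + ν) ≤ |(m : ℝ) - c₁ * (n : ℝ)| := by
    intro m
    have ht := htype m n hn0
    have h1 : |c₁ - (m:ℝ)/(n:ℝ)| * N = |(m : ℝ) - c₁ * (n : ℝ)| := by
      rw [hNdef, ← abs_mul, abs_sub_comm]
      congr 1
      field_simp
    have h2 : K / N ^ (2 + ν) * N = K / N ^ (1 + ν) := by
      rw [show (2:ℝ) + ν = (1 + ν) + 1 by ring, Real.rpow_add hN0,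
        Real.rpow_one]
      field_simp
    rw [← h1, ← h2]
    exact mul_le_mul_of_nonneg_right ht hN0.le
  set A : ℝ := |(n₁ : ℝ) - c₁ * (n : ℝ)| with hA
  set B : ℝ := |(n₁ : ℝ) - c₂ * (n : ℝ)| with hB
  have hAlow : K / N ^ (1 + ν) ≤ A := hlow n₁
  have hBswap : (n₁ : ℝ) - c₂ * (n : ℝ) = -(((n₂ : ℝ)) - c₁ * (n : ℝ)) := by
    linear_combination -hnc - (n:ℝ) * hsum
  have hBlow : K / N ^ (1 + ν) ≤ B := by
    rw [hB, hBswap, abs_neg]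
    exact hlow n₂
  -- triangle: d*N ≤ A + B
  have htri : d * N ≤ A + B := by
    have : d * N = |((n₁:ℝ) - c₂ * n) - ((n₁:ℝ) - c₁ * n)| := by
      rw [show ((n₁:ℝ) - c₂ * n) - ((n₁:ℝ) - c₁ * n) = (c₁ - c₂) * n by ring,
        abs_mul, ← hdd, ← hNdef, abs_of_pos hdpos]
    rw [this]
    calc |((n₁:ℝ) - c₂ * n) - ((n₁:ℝ) - c₁ * n)|
        ≤ |(n₁:ℝ) - c₂ * n| + |(n₁:ℝ) - c₁ * n| := abs_sub _ _
      _ = A + B := by rw [← hA, ← hB]; ring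
  -- product lower bound
  have hABprod : (ε * N) * (K / N ^ (1 + ν)) ≤ A * B := by
    have hKN : (0:ℝ) < K / N ^ (1 + ν) := by positivity
    rcases hnear with hc | hc
    · -- A < 1, B is far
      have hBfar : ε * N ≤ B := by
        refine far_bound d K ν N B A hdpos hK hν hN1 ?_ hc hBlow
        linarith
      calc (ε * N) * (K / N ^ (1 + ν)) ≤ B * A :=
            mul_le_mul hBfar hAlow hKN.le (le_trans (by positivity) hBfar)
        _ = A * B := mul_comm _ _
    · -- B < 1, A is far
      have hAfar : ε * N ≤ A := by
        refine far_bound d K ν N A B hdpos hK hν hN1 ?_ hc hAlow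
        linarith
      exact mul_le_mul hAfar hBlow hKN.le (le_trans (by positivity) hAfar)
  -- the factorization of the resonance function
  have hfac : (n : ℝ) ^ 3 - α * (n₁ : ℝ) ^ 3 - α * (n₂ : ℝ) ^ 3 =
      -(3 * α) * (n : ℝ) * ((n₁ : ℝ) - c₁ * n) * ((n₁ : ℝ) - c₂ * n) := by
    have h2 : (n₂ : ℝ) = (n : ℝ) - n₁ := by linarith [hnc]
    rw [h2]
    linear_combination (n:ℝ)^3 * hprodc - 3 * α * (n:ℝ)^2 * (n₁:ℝ) * hsum
  have habs : |(n : ℝ) ^ 3 - α * (n₁ : ℝ) ^ 3 - α * (n₂ : ℝ) ^ 3| =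
      3 * α * N * (A * B) := by
    rw [hfac, abs_mul, abs_mul, abs_mul, abs_neg, abs_of_pos (by linarith : (0:ℝ) < 3 * α),
      ← hNdef, ← hA, ← hB]
    ring
  -- lower bound for the resonance function
  have hres : 3 * α * ε * K * N ^ (1 - ν) ≤
      |(n : ℝ) ^ 3 - α * (n₁ : ℝ) ^ 3 - α * (n₂ : ℝ) ^ 3| := by
    rw [habs]
    have key : ε * K * N ^ (1 - ν) ≤ N * ((ε * N) * (K / N ^ (1 + ν))) := by
      have hexp : N ^ ((1:ℝ) - ν) * N ^ ((1:ℝ) + ν) = N ^ (2:ℕ) := by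
        rw [← Real.rpow_add hN0, ← Real.rpow_natCast N 2]
        norm_num
      have hNpow : (0:ℝ) < N ^ ((1:ℝ) + ν) := Real.rpow_pos_of_pos hN0 _
      have h1 : N ^ ((1:ℝ) - ν) = N ^ (2:ℕ) / N ^ ((1:ℝ) + ν) := by
        rw [eq_div_iff hNpow.ne']; exact hexp
      have h2 : N * ((ε * N) * (K / N ^ ((1:ℝ) + ν))) =
          ε * K * (N ^ (2:ℕ) / N ^ ((1:ℝ) + ν)) := by
        field_simp
      rw [h1, h2]
    calc 3 * α * ε * K * N ^ (1 - ν) = 3 * α * (ε * K * N ^ (1 - ν)) := by ring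
      _ ≤ 3 * α * (N * ((ε * N) * (K / N ^ (1 + ν)))) := by
          exact mul_le_mul_of_nonneg_left key (by linarith)
      _ ≤ 3 * α * N * (A * B) := by
          have := mul_le_mul_of_nonneg_left hABprod (by positivity : (0:ℝ) ≤ 3 * α * N)
          calc 3 * α * (N * ((ε * N) * (K / N ^ (1 + ν))))
              = 3 * α * N * ((ε * N) * (K / N ^ (1 + ν))) := by ring
            _ ≤ 3 * α * N * (A * B) := this
  -- square-root bound
  have hreshalf : (3 * α * ε * K) ^ ((1:ℝ)/2) * N ^ ((1 - ν)/2) ≤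
      |(n : ℝ) ^ 3 - α * (n₁ : ℝ) ^ 3 - α * (n₂ : ℝ) ^ 3| ^ ((1:ℝ)/2) := by
    have h := Real.rpow_le_rpow (by positivity) hres (by norm_num : (0:ℝ) ≤ 1/2)
    rwa [Real.mul_rpow (by positivity) (by positivity),
      ← Real.rpow_mul hN0.le, show (1 - ν) * (1/2) = (1 - ν)/2 by ring] at h
  -- lower bounds for 1 + |n₁| and 1 + |n₂|
  have hx : m0 * N ≤ 1 + |(n₁ : ℝ)| := by
    rcases hnear with hc | hc
    · have : c₁ * N = |c₁ * (n:ℝ)| := by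
        rw [abs_mul, abs_of_pos hc1pos, hNdef]
      have h2 : |c₁ * (n:ℝ)| ≤ |(n₁:ℝ)| + |(n₁:ℝ) - c₁ * n| := by
        calc |c₁ * (n:ℝ)| = |(n₁:ℝ) - ((n₁:ℝ) - c₁ * n)| := by ring_nf
          _ ≤ |(n₁:ℝ)| + |(n₁:ℝ) - c₁ * n| := abs_sub _ _
      have hm : m0 ≤ c₁ := min_le_left _ _
      calc m0 * N ≤ c₁ * N := mul_le_mul_of_nonneg_right hm hN0.le
        _ = |c₁ * (n:ℝ)| := this
        _ ≤ |(n₁:ℝ)| + |(n₁:ℝ) - c₁ * n| := h2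
        _ ≤ 1 + |(n₁:ℝ)| := by linarith
    · have : |c₂| * N = |c₂ * (n:ℝ)| := by rw [abs_mul, hNdef]
      have h2 : |c₂ * (n:ℝ)| ≤ |(n₁:ℝ)| + |(n₁:ℝ) - c₂ * n| := by
        calc |c₂ * (n:ℝ)| = |(n₁:ℝ) - ((n₁:ℝ) - c₂ * n)| := by ring_nf
          _ ≤ |(n₁:ℝ)| + |(n₁:ℝ) - c₂ * n| := abs_sub _ _
      have hm : m0 ≤ |c₂| := min_le_right _ _
      calc m0 * N ≤ |c₂| * N := mul_le_mul_of_nonneg_right hm hN0.le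
        _ = |c₂ * (n:ℝ)| := this
        _ ≤ |(n₁:ℝ)| + |(n₁:ℝ) - c₂ * n| := h2
        _ ≤ 1 + |(n₁:ℝ)| := by linarith
  have hy : m0 * N ≤ 1 + |(n₂ : ℝ)| := by
    rcases hnear with hc | hc
    · -- |n₂ - c₂ n| = |n₁ - c₁ n| < 1
      have hswap : (n₂ : ℝ) - c₂ * n = -(((n₁ : ℝ)) - c₁ * n) := by
        linear_combination -hnc - (n:ℝ) * hsum
      have hc' : |(n₂:ℝ) - c₂ * n| < 1 := by rw [hswap, abs_neg]; exact hc
      have : |c₂| * N = |c₂ * (n:ℝ)| := by rw [abs_mul, hNdef]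
      have h2 : |c₂ * (n:ℝ)| ≤ |(n₂:ℝ)| + |(n₂:ℝ) - c₂ * n| := by
        calc |c₂ * (n:ℝ)| = |(n₂:ℝ) - ((n₂:ℝ) - c₂ * n)| := by ring_nf
          _ ≤ |(n₂:ℝ)| + |(n₂:ℝ) - c₂ * n| := abs_sub _ _
      have hm : m0 ≤ |c₂| := min_le_right _ _
      calc m0 * N ≤ |c₂| * N := mul_le_mul_of_nonneg_right hm hN0.le
        _ = |c₂ * (n:ℝ)| := this
        _ ≤ |(n₂:ℝ)| + |(n₂:ℝ) - c₂ * n| := h2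
        _ ≤ 1 + |(n₂:ℝ)| := by linarith [hc']
    · have hswap : (n₂ : ℝ) - c₁ * n = -(((n₁ : ℝ)) - c₂ * n) := by
        linear_combination -hnc - (n:ℝ) * hsum
      have hc' : |(n₂:ℝ) - c₁ * n| < 1 := by rw [hswap, abs_neg]; exact hc
      have : c₁ * N = |c₁ * (n:ℝ)| := by rw [abs_mul, abs_of_pos hc1pos, hNdef]
      have h2 : |c₁ * (n:ℝ)| ≤ |(n₂:ℝ)| + |(n₂:ℝ) - c₁ * n| := by
        calc |c₁ * (n:ℝ)| = |(n₂:ℝ) - ((n₂:ℝ) - c₁ * n)| := by ring_nf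
          _ ≤ |(n₂:ℝ)| + |(n₂:ℝ) - c₁ * n| := abs_sub _ _
      have hm : m0 ≤ c₁ := min_le_left _ _
      calc m0 * N ≤ c₁ * N := mul_le_mul_of_nonneg_right hm hN0.le
        _ = |c₁ * (n:ℝ)| := this
        _ ≤ |(n₂:ℝ)| + |(n₂:ℝ) - c₁ * n| := h2
        _ ≤ 1 + |(n₂:ℝ)| := by linarith [hc']
  -- raise to powers
  have hx1 : (1:ℝ) ≤ 1 + |(n₁:ℝ)| := by linarith [abs_nonneg ((n₁:ℝ))]
  have hy1 : (1:ℝ) ≤ 1 + |(n₂:ℝ)| := by linarith [abs_nonneg ((n₂:ℝ))]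
  have hxpow : (m0 * N) ^ s₁ ≤ (1 + |(n₁:ℝ)|) ^ s₁ :=
    Real.rpow_le_rpow (by positivity) hx hs₁
  have hypow : (m0 * N) ^ ((1 + ν)/2) ≤ (1 + |(n₂:ℝ)|) ^ s₂ := by
    calc (m0 * N) ^ ((1 + ν)/2) ≤ (1 + |(n₂:ℝ)|) ^ ((1 + ν)/2) :=
          Real.rpow_le_rpow (by positivity) hy (by linarith)
      _ ≤ (1 + |(n₂:ℝ)|) ^ s₂ :=
          Real.rpow_le_rpow_of_exponent_le hy1 (by linarith)
  -- combine
  have hCpos : 0 < C := by rw [hC]; positivity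
  have hkey : C * (m0 * N) ^ s₁ * ((m0 * N) ^ ((1 + ν)/2)) *
      ((3 * α * ε * K) ^ ((1:ℝ)/2) * N ^ ((1 - ν)/2)) ≤
      C * (1 + |(n₁:ℝ)|) ^ s₁ * (1 + |(n₂:ℝ)|) ^ s₂ *
      |(n : ℝ) ^ 3 - α * (n₁ : ℝ) ^ 3 - α * (n₂ : ℝ) ^ 3| ^ ((1:ℝ)/2) := by
    have hxnn : (0:ℝ) ≤ (1 + |(n₁:ℝ)|) ^ s₁ := Real.rpow_nonneg (by linarith) _
    have hynn : (0:ℝ) ≤ (1 + |(n₂:ℝ)|) ^ s₂ := Real.rpow_nonneg (by linarith) _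
    apply mul_le_mul _ hreshalf (by positivity)
      (by exact mul_nonneg (mul_nonneg hCpos.le hxnn) hynn)
    apply mul_le_mul _ hypow (by positivity) (mul_nonneg hCpos.le hxnn)
    exact mul_le_mul_of_nonneg_left hxpow hCpos.le
  have hNsplit : N ^ (s₁ + 1) = N ^ s₁ * N ^ ((1 + ν)/2) * N ^ ((1 - ν)/2) := by
    rw [← Real.rpow_add hN0, ← Real.rpow_add hN0]
    congr 1
    ring
  have hconst : C * D = 2 ^ (s₁ + 1) := by
    rw [hC, div_mul_cancel₀ _ (ne_of_gt hDpos)]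
  calc (1 + N) ^ (s₁ + 1) ≤ (2 * N) ^ (s₁ + 1) :=
        Real.rpow_le_rpow (by positivity) (by linarith) (by linarith)
    _ = 2 ^ (s₁ + 1) * N ^ (s₁ + 1) := Real.mul_rpow (by norm_num) hN0.le
    _ = C * (m0 * N) ^ s₁ * ((m0 * N) ^ ((1 + ν)/2)) *
        ((3 * α * ε * K) ^ ((1:ℝ)/2) * N ^ ((1 - ν)/2)) := by
        rw [Real.mul_rpow hm0pos.le hN0.le, Real.mul_rpow hm0pos.le hN0.le,
          hNsplit, ← hconst, hD]
        ring
    _ ≤ _ := hkey
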